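/- Let $X_1, \dots, X_k$ be nonnegative random variables, and suppose there exist $C \ge 0$, $\alpha > 0$, $\gamma \in (0,1]$ such that $\mathbb{P}(X_j \ge t \mid X_1 = x_1, \dots, X_{j-1} = x_{j-1}) \le C e^{-\alpha t^\gamma}$ for all $t \ge 0$, $1 \le j \le k$, and all $x_1,\dots,x_{j-1} \ge 0$. Then for every $\beta \in (0, \alpha/2]$ and $t \ge 0$, $\mathbb{P}(X_1 + \cdots + X_k \ge t) \le (1 + \beta C_1)^k e^{-\beta t^\gamma}$, where $C_1 = C\gamma \int_0^\infty s^{\gamma-1} e^{-\alpha s^\gamma/2}\,ds$. -/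

import Mathlib

open MeasureTheory Real Set Filter
open scoped NNReal ENNReal



lemma aux_hasDerivAt_exp_rpow (c γ : ℝ) {x : ℝ} (hx : x ≠ 0) :
    HasDerivAt (fun s : ℝ => Real.exp (c * s ^ γ))
      (Real.exp (c * x ^ γ) * (c * (γ * x ^ (γ - 1)))) x := by
  have h1 : HasDerivAt (fun s : ℝ => s ^ γ) (γ * x ^ (γ - 1)) x :=
    Real.hasDerivAt_rpow_const (Or.inl hx)
  simpa [mul_assoc] using (h1.const_mul c).exp

lemma aux_cont_exp_rpow (c γ : ℝ) (hγ : 0 < γ) :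
    Continuous fun s : ℝ => Real.exp (c * s ^ γ) := by
  apply Real.continuous_exp.comp
  apply continuous_const.mul
  rw [continuous_iff_continuousAt]
  intro x
  exact Real.continuousAt_rpow_const x γ (Or.inr hγ.le)

lemma aux_integrableOn (α γ : ℝ) (hα : 0 < α) (hγ : 0 < γ) :
    IntegrableOn (fun s : ℝ => s ^ (γ - 1) * Real.exp (-α * s ^ γ / 2)) (Ioi 0) := by
  have key : ∀ s : ℝ, -α * s ^ γ / 2 = (-(α/2)) * s ^ γ := fun s => by ring
  simp only [key]
  apply integrableOn_Ioi_deriv_of_nonneg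
    (g := fun s : ℝ => (-(2/(α*γ))) * Real.exp ((-(α/2)) * s ^ γ)) (l := 0)
  · exact (continuous_const.mul (aux_cont_exp_rpow _ _ hγ)).continuousWithinAt
  · intro x hx
    have := (aux_hasDerivAt_exp_rpow (-(α/2)) γ (ne_of_gt hx)).const_mul (-(2/(α*γ)))
    refine this.congr_deriv ?_
    field_simp
  · intro x hx
    exact mul_nonneg (Real.rpow_nonneg (le_of_lt hx) _) (Real.exp_nonneg _)
  · rw [show (0:ℝ) = (-(2/(α*γ))) * 0 by ring]
    apply Tendsto.const_mul
    apply Real.tendsto_exp_atBot.comp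
    apply Tendsto.const_mul_atTop_of_neg (by linarith : -(α/2) < 0)
    exact tendsto_rpow_atTop hγ

lemma aux_rpow_add_le {x y γ : ℝ} (hx : 0 ≤ x) (hy : 0 ≤ y) (hγ0 : 0 ≤ γ) (hγ1 : γ ≤ 1) :
    (x + y) ^ γ ≤ x ^ γ + y ^ γ := by
  have h := NNReal.rpow_add_le_add_rpow (Real.toNNReal x) (Real.toNNReal y) hγ0 hγ1
  have h2 : ((Real.toNNReal x + Real.toNNReal y) ^ γ : ℝ≥0) = ((x + y) ^ γ : ℝ) := by
    rw [← Real.toNNReal_add hx hy, NNReal.coe_rpow, Real.coe_toNNReal _ (by linarith)]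
  have h3 : ((Real.toNNReal x ^ γ + Real.toNNReal y ^ γ : ℝ≥0) : ℝ) = x ^ γ + y ^ γ := by
    push_cast
    rw [Real.coe_toNNReal _ hx, Real.coe_toNNReal _ hy]
  calc (x + y) ^ γ = ((Real.toNNReal x + Real.toNNReal y) ^ γ : ℝ≥0) := h2.symm
    _ ≤ ((Real.toNNReal x ^ γ + Real.toNNReal y ^ γ : ℝ≥0) : ℝ) := by exact_mod_cast h
    _ = x ^ γ + y ^ γ := h3

lemma aux_rpow_sum_le {ι : Type*} (s : Finset ι) (f : ι → ℝ) {γ : ℝ}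
    (hf : ∀ i ∈ s, 0 ≤ f i) (hγ0 : 0 < γ) (hγ1 : γ ≤ 1) :
    (∑ i ∈ s, f i) ^ γ ≤ ∑ i ∈ s, f i ^ γ := by
  induction s using Finset.cons_induction with
  | empty => simp [Real.zero_rpow hγ0.ne']
  | cons a s ha ih =>
    rw [Finset.sum_cons, Finset.sum_cons]
    have h1 : 0 ≤ f a := hf a (Finset.mem_cons_self a s)
    have h2 : ∀ i ∈ s, 0 ≤ f i := fun i hi => hf i (Finset.mem_cons_of_mem hi)
    calc (f a + ∑ i ∈ s, f i) ^ γ ≤ f a ^ γ + (∑ i ∈ s, f i) ^ γ :=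
          aux_rpow_add_le h1 (Finset.sum_nonneg h2) hγ0.le hγ1
      _ ≤ f a ^ γ + ∑ i ∈ s, f i ^ γ := by linarith [ih h2]

lemma aux_ftc (β γ : ℝ) (hβ : 0 < β) (hγ0 : 0 < γ) {x : ℝ} (hx : 0 ≤ x) :
    ∫ s in (0:ℝ)..x, β * γ * s ^ (γ - 1) * Real.exp (β * s ^ γ)
      = Real.exp (β * x ^ γ) - 1 := by
  have hint : IntervalIntegrable (fun s : ℝ => β * γ * s ^ (γ - 1) * Real.exp (β * s ^ γ))
      volume 0 x := by
    have h1 : IntervalIntegrable (fun s : ℝ => s ^ (γ - 1)) volume 0 x :=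
      intervalIntegral.intervalIntegrable_rpow' (by linarith)
    have h2 := h1.continuousOn_mul (g := fun s => β * γ * Real.exp (β * s ^ γ))
      ((continuous_const.mul (aux_cont_exp_rpow β γ hγ0)).continuousOn)
    have heq : (fun s : ℝ => β * γ * s ^ (γ - 1) * Real.exp (β * s ^ γ))
        = fun s : ℝ => (β * γ * Real.exp (β * s ^ γ)) * s ^ (γ - 1) := funext fun s => by ring
    rw [heq]; exact h2
  rw [intervalIntegral.integral_eq_sub_of_hasDerivAt_of_le hx
    ((aux_cont_exp_rpow β γ hγ0).continuousOn)
    (fun s hs => by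
      have := aux_hasDerivAt_exp_rpow β γ (ne_of_gt hs.1)
      refine this.congr_deriv ?_
      ring) hint]
  rw [Real.zero_rpow hγ0.ne', mul_zero, Real.exp_zero]

lemma aux_step {Ω : Type*} [MeasurableSpace Ω] (μ : Measure Ω)
    (Y : Ω → ℝ) (hYm : Measurable Y) (hYnn : ∀ ω, 0 ≤ Y ω)
    (C α γ β : ℝ) (hC : 0 ≤ C) (hα : 0 < α) (hγ0 : 0 < γ) (hγ1 : γ ≤ 1)
    (hβ0 : 0 < β) (hβ : β ≤ α / 2)
    (g : Ω → ℝ) (hgm : Measurable g) (hgnn : ∀ ω, 0 ≤ g ω) (hgi : Integrable g μ)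
    (htail : ∀ s : ℝ, 0 ≤ s →
      ∫ ω in {ω | s ≤ Y ω}, g ω ∂μ ≤ C * Real.exp (-α * s ^ γ) * ∫ ω, g ω ∂μ) :
    Integrable (fun ω => g ω * Real.exp (β * Y ω ^ γ)) μ ∧
    ∫ ω, g ω * Real.exp (β * Y ω ^ γ) ∂μ
      ≤ (1 + β * (C * γ * ∫ s in Ioi (0:ℝ), s ^ (γ - 1) * Real.exp (-α * s ^ γ / 2)))
          * ∫ ω, g ω ∂μ := by
  set I := ∫ ω, g ω ∂μ with hIdef
  have hI0 : 0 ≤ I := integral_nonneg hgnn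
  set C1 := C * γ * ∫ s in Ioi (0:ℝ), s ^ (γ - 1) * Real.exp (-α * s ^ γ / 2) with hC1def
  have hintC1 : 0 ≤ ∫ s in Ioi (0:ℝ), s ^ (γ - 1) * Real.exp (-α * s ^ γ / 2) :=
    setIntegral_nonneg measurableSet_Ioi fun s hs =>
      mul_nonneg (Real.rpow_nonneg (le_of_lt hs) _) (Real.exp_nonneg _)
  have hC1 : 0 ≤ C1 := by positivity
  set ν := μ.withDensity fun ω => ENNReal.ofReal (g ω) with hνdef
  have hνA : ∀ A : Set Ω, MeasurableSet A → ν A = ENNReal.ofReal (∫ ω in A, g ω ∂μ) := by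
    intro A hA
    rw [hνdef, withDensity_apply _ hA,
      ← ofReal_integral_eq_lintegral_ofReal hgi.restrict (ae_of_all _ hgnn)]
  have hνuniv : ν univ = ENNReal.ofReal I := by
    rw [hνA univ MeasurableSet.univ, hIdef, setIntegral_univ]
  set gl := fun s : ℝ => β * γ * s ^ (γ - 1) * Real.exp (β * s ^ γ) with hgldef
  have hglint : ∀ x : ℝ, 0 < x → IntervalIntegrable gl volume 0 x := by
    intro x hx
    have h1 : IntervalIntegrable (fun s : ℝ => s ^ (γ - 1)) volume 0 x :=
      intervalIntegral.intervalIntegrable_rpow' (by linarith)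
    have h2 := h1.continuousOn_mul (g := fun s => β * γ * Real.exp (β * s ^ γ))
      ((continuous_const.mul (aux_cont_exp_rpow β γ hγ0)).continuousOn)
    have heq : gl = fun s : ℝ => (β * γ * Real.exp (β * s ^ γ)) * s ^ (γ - 1) :=
      funext fun s => by rw [hgldef]; ring
    rw [heq]; exact h2
  have hFm : Measurable fun ω => Real.exp (β * Y ω ^ γ) :=
    (aux_cont_exp_rpow β γ hγ0).measurable.comp hYm
  have hlayer : ∫⁻ ω, ENNReal.ofReal (Real.exp (β * Y ω ^ γ) - 1) ∂ν
      = ∫⁻ s in Ioi 0, ν {ω | s ≤ Y ω} * ENNReal.ofReal (gl s) := by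
    have := lintegral_comp_eq_lintegral_meas_le_mul (μ := ν) (f := Y) (g := gl)
      (ae_of_all _ hYnn) hYm.aemeasurable hglint
      ((ae_restrict_iff' measurableSet_Ioi).2 (ae_of_all _ fun s hs => by
        exact mul_nonneg (mul_nonneg (by positivity) (Real.rpow_nonneg (le_of_lt hs) _))
          (Real.exp_nonneg _)))
    rw [← this]
    apply lintegral_congr
    intro ω
    rw [aux_ftc β γ hβ0 hγ0 (hYnn ω)]
  have key1 : ∫⁻ ω, ENNReal.ofReal (Real.exp (β * Y ω ^ γ) - 1) ∂ν
      ≤ ENNReal.ofReal (I * (β * C1)) := by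
    rw [hlayer]
    have step1 : ∫⁻ s in Ioi 0, ν {ω | s ≤ Y ω} * ENNReal.ofReal (gl s)
        ≤ ∫⁻ s in Ioi 0, ENNReal.ofReal (I * (β * C * γ) * (s ^ (γ - 1) * Real.exp (-α * s ^ γ / 2))) := by
      apply lintegral_mono_ae
      rw [ae_restrict_iff' measurableSet_Ioi]
      apply ae_of_all
      intro s hs
      have hs0 : (0:ℝ) < s := hs
      have hsetm : MeasurableSet {ω | s ≤ Y ω} := measurableSet_le measurable_const hYm
      have h1 : ν {ω | s ≤ Y ω} ≤ ENNReal.ofReal (C * Real.exp (-α * s ^ γ) * I) := by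
        rw [hνA _ hsetm]
        exact ENNReal.ofReal_le_ofReal (htail s hs0.le)
      calc ν {ω | s ≤ Y ω} * ENNReal.ofReal (gl s)
          ≤ ENNReal.ofReal (C * Real.exp (-α * s ^ γ) * I) * ENNReal.ofReal (gl s) :=
            mul_le_mul_left h1 _
        _ = ENNReal.ofReal ((C * Real.exp (-α * s ^ γ) * I) * gl s) :=
            (ENNReal.ofReal_mul (by positivity)).symm
        _ ≤ ENNReal.ofReal (I * (β * C * γ) * (s ^ (γ - 1) * Real.exp (-α * s ^ γ / 2))) := by
            apply ENNReal.ofReal_le_ofReal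
            have hsγ : 0 ≤ s ^ γ := Real.rpow_nonneg hs0.le _
            have hsγ1 : 0 ≤ s ^ (γ - 1) := Real.rpow_nonneg hs0.le _
            have e1 : Real.exp (-α * s ^ γ) * Real.exp (β * s ^ γ)
                ≤ Real.exp (-α * s ^ γ / 2) := by
              rw [← Real.exp_add]
              apply Real.exp_le_exp.2
              nlinarith
            calc (C * Real.exp (-α * s ^ γ) * I) * gl s
                = (C * I * β * γ * s ^ (γ - 1)) * (Real.exp (-α * s ^ γ) * Real.exp (β * s ^ γ)) := by
                  rw [hgldef]; ring
              _ ≤ (C * I * β * γ * s ^ (γ - 1)) * Real.exp (-α * s ^ γ / 2) := by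
                  apply mul_le_mul_of_nonneg_left e1 (by positivity)
              _ = I * (β * C * γ) * (s ^ (γ - 1) * Real.exp (-α * s ^ γ / 2)) := by ring
    have step2 : ∫⁻ s in Ioi 0, ENNReal.ofReal (I * (β * C * γ) * (s ^ (γ - 1) * Real.exp (-α * s ^ γ / 2)))
        = ENNReal.ofReal (I * (β * C1)) := by
      rw [← ofReal_integral_eq_lintegral_ofReal
        (((aux_integrableOn α γ hα hγ0)).const_mul (I * (β * C * γ)))
        ((ae_restrict_iff' measurableSet_Ioi).2 (ae_of_all _ fun s hs => by
          exact mul_nonneg (by positivity)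
            (mul_nonneg (Real.rpow_nonneg (le_of_lt hs) _) (Real.exp_nonneg _))))]
      rw [integral_const_mul]
      congr 1
      rw [hC1def]; ring
    exact le_trans step1 (le_of_eq step2)
  have key2 : ∫⁻ ω, ENNReal.ofReal (Real.exp (β * Y ω ^ γ)) ∂ν
      ≤ ENNReal.ofReal (I * (1 + β * C1)) := by
    have hone : ∀ ω, 1 ≤ Real.exp (β * Y ω ^ γ) := fun ω =>
      Real.one_le_exp (mul_nonneg hβ0.le (Real.rpow_nonneg (hYnn ω) _))
    have heq : ∀ ω, ENNReal.ofReal (Real.exp (β * Y ω ^ γ))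
        = ENNReal.ofReal (Real.exp (β * Y ω ^ γ) - 1) + ENNReal.ofReal 1 := by
      intro ω
      rw [← ENNReal.ofReal_add (by linarith [hone ω]) zero_le_one]
      ring_nf
    calc ∫⁻ ω, ENNReal.ofReal (Real.exp (β * Y ω ^ γ)) ∂ν
        = ∫⁻ ω, (ENNReal.ofReal (Real.exp (β * Y ω ^ γ) - 1) + ENNReal.ofReal 1) ∂ν :=
          lintegral_congr heq
      _ = (∫⁻ ω, ENNReal.ofReal (Real.exp (β * Y ω ^ γ) - 1) ∂ν) + ENNReal.ofReal 1 * ν univ := by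
          rw [lintegral_add_right _ measurable_const, lintegral_const]
      _ ≤ ENNReal.ofReal (I * (β * C1)) + ENNReal.ofReal 1 * ENNReal.ofReal I := by
          rw [hνuniv]; exact add_le_add_left key1 _
      _ = ENNReal.ofReal (I * (β * C1) + I) := by
          rw [ENNReal.ofReal_one, one_mul, ← ENNReal.ofReal_add (by positivity) hI0]
      _ = ENNReal.ofReal (I * (1 + β * C1)) := by congr 1; ring
  have key3 : ∫⁻ ω, ENNReal.ofReal (g ω * Real.exp (β * Y ω ^ γ)) ∂μ
      = ∫⁻ ω, ENNReal.ofReal (Real.exp (β * Y ω ^ γ)) ∂ν := by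
    rw [hνdef, lintegral_withDensity_eq_lintegral_mul μ hgm.ennreal_ofReal hFm.ennreal_ofReal]
    apply lintegral_congr
    intro ω
    simp only [Pi.mul_apply]
    rw [← ENNReal.ofReal_mul (hgnn ω)]
  have hbound : ∫⁻ ω, ENNReal.ofReal (g ω * Real.exp (β * Y ω ^ γ)) ∂μ
      ≤ ENNReal.ofReal (I * (1 + β * C1)) := key3 ▸ key2
  have hmeas : AEStronglyMeasurable (fun ω => g ω * Real.exp (β * Y ω ^ γ)) μ :=
    (hgm.mul hFm).aestronglyMeasurable
  have hnn : ∀ ω, 0 ≤ g ω * Real.exp (β * Y ω ^ γ) := fun ω =>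
    mul_nonneg (hgnn ω) (Real.exp_nonneg _)
  have hintg : Integrable (fun ω => g ω * Real.exp (β * Y ω ^ γ)) μ := by
    refine ⟨hmeas, ?_⟩
    rw [hasFiniteIntegral_iff_ofReal (ae_of_all _ hnn)]
    exact lt_of_le_of_lt hbound ENNReal.ofReal_lt_top
  refine ⟨hintg, ?_⟩
  rw [integral_eq_lintegral_of_nonneg_ae (ae_of_all _ hnn) hmeas]
  calc (∫⁻ ω, ENNReal.ofReal (g ω * Real.exp (β * Y ω ^ γ)) ∂μ).toReal
      ≤ (ENNReal.ofReal (I * (1 + β * C1))).toReal :=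
        ENNReal.toReal_mono ENNReal.ofReal_ne_top hbound
    _ = I * (1 + β * C1) := ENNReal.toReal_ofReal (by positivity)
    _ = (1 + β * C1) * I := mul_comm _ _


theorem sum_stretched_exponential_tail {Ω : Type*} [MeasurableSpace Ω]
    (μ : Measure Ω) [IsProbabilityMeasure μ]
    (k : ℕ) (X : Fin k → Ω → ℝ)
    (hXm : ∀ j, Measurable (X j)) (hXnn : ∀ j ω, 0 ≤ X j ω)
    (C α γ : ℝ) (hC : 0 ≤ C) (hα : 0 < α) (hγ : γ ∈ Set.Ioc (0:ℝ) 1)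
    (hcond : ∀ (j : Fin k) (t : ℝ), 0 ≤ t →
      ∀ g : Ω → ℝ, Measurable g → (∀ ω, 0 ≤ g ω) → Integrable g μ →
        (∀ ω ω' : Ω, (∀ i : Fin k, i < j → X i ω = X i ω') → g ω = g ω') →
        ∫ ω in {ω | t ≤ X j ω}, g ω ∂μ
          ≤ C * Real.exp (-α * t ^ γ) * ∫ ω, g ω ∂μ)
    (β : ℝ) (hβ : β ∈ Set.Ioc 0 (α / 2)) (t : ℝ) (ht : 0 ≤ t) :
    (μ {ω | t ≤ ∑ j, X j ω}).toReal
      ≤ (1 + β * (C * γ * ∫ s in Set.Ioi (0:ℝ), s ^ (γ - 1) * Real.exp (-α * s ^ γ / 2))) ^ k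
          * Real.exp (-β * t ^ γ) := by
  obtain ⟨hγ0, hγ1⟩ := hγ
  obtain ⟨hβ0, hβle⟩ := hβ
  set C1 := C * γ * ∫ s in Set.Ioi (0:ℝ), s ^ (γ - 1) * Real.exp (-α * s ^ γ / 2) with hC1def
  have hintC1 : 0 ≤ ∫ s in Set.Ioi (0:ℝ), s ^ (γ - 1) * Real.exp (-α * s ^ γ / 2) :=
    setIntegral_nonneg measurableSet_Ioi fun s hs =>
      mul_nonneg (Real.rpow_nonneg (le_of_lt hs) _) (Real.exp_nonneg _)
  have hC1 : 0 ≤ C1 := by positivity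
  set G : ℕ → Ω → ℝ := fun i ω => if h : i < k then Real.exp (β * X ⟨i, h⟩ ω ^ γ) else 1
    with hGdef
  have hGm : ∀ i, Measurable (G i) := by
    intro i
    rw [hGdef]
    by_cases h : i < k
    · simp only [dif_pos h]
      exact (aux_cont_exp_rpow β γ hγ0).measurable.comp (hXm _)
    · simp only [dif_neg h]; exact measurable_const
  have hGnn : ∀ i ω, 0 ≤ G i ω := by
    intro i ω
    rw [hGdef]
    by_cases h : i < k
    · simp only [dif_pos h]; exact Real.exp_nonneg _
    · simp only [dif_neg h]; exact zero_le_one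
  have main : ∀ n : ℕ, n ≤ k →
      Integrable (fun ω => ∏ i ∈ Finset.range n, G i ω) μ ∧
      ∫ ω, ∏ i ∈ Finset.range n, G i ω ∂μ ≤ (1 + β * C1) ^ n := by
    intro n
    induction n with
    | zero =>
      intro _
      refine ⟨by simpa using integrable_const (1:ℝ), ?_⟩
      simp [integral_const]
    | succ n ih =>
      intro hn1
      have hn : n < k := hn1
      obtain ⟨ihint, ihle⟩ := ih hn.le
      set j : Fin k := ⟨n, hn⟩ with hjdef
      have hFm : Measurable (fun ω => ∏ i ∈ Finset.range n, G i ω) :=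
        Finset.measurable_prod _ fun i _ => hGm i
      have hFnn : ∀ ω, 0 ≤ ∏ i ∈ Finset.range n, G i ω :=
        fun ω => Finset.prod_nonneg fun i _ => hGnn i ω
      have hdepend : ∀ ω ω' : Ω, (∀ i : Fin k, i < j → X i ω = X i ω') →
          (∏ i ∈ Finset.range n, G i ω) = ∏ i ∈ Finset.range n, G i ω' := by
        intro ω ω' h
        apply Finset.prod_congr rfl
        intro i hi
        have hin : i < n := Finset.mem_range.1 hi
        have hik : i < k := lt_of_lt_of_le hin hn.le
        have hXi := h ⟨i, hik⟩ (by rw [hjdef]; exact Fin.mk_lt_mk.2 hin)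
        rw [hGdef]
        simp only [dif_pos hik, hXi]
      have htail : ∀ s : ℝ, 0 ≤ s →
          ∫ ω in {ω | s ≤ X j ω}, (∏ i ∈ Finset.range n, G i ω) ∂μ
            ≤ C * Real.exp (-α * s ^ γ) * ∫ ω, ∏ i ∈ Finset.range n, G i ω ∂μ :=
        fun s hs => hcond j s hs _ hFm hFnn ihint hdepend
      obtain ⟨hint2, hle2⟩ := aux_step μ (X j) (hXm j) (hXnn j) C α γ β hC hα hγ0 hγ1
        hβ0 hβle _ hFm hFnn ihint htail
      have hprodeq : (fun ω => ∏ i ∈ Finset.range (n+1), G i ω)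
          = fun ω => (∏ i ∈ Finset.range n, G i ω) * Real.exp (β * X j ω ^ γ) := by
        funext ω
        rw [Finset.prod_range_succ]
        congr 1
        rw [hGdef]
        simp only [dif_pos hn]
        rfl
      refine ⟨by rw [hprodeq]; exact hint2, ?_⟩
      calc ∫ ω, ∏ i ∈ Finset.range (n+1), G i ω ∂μ
          = ∫ ω, (∏ i ∈ Finset.range n, G i ω) * Real.exp (β * X j ω ^ γ) ∂μ := by
            rw [hprodeq]
        _ ≤ (1 + β * C1) * ∫ ω, ∏ i ∈ Finset.range n, G i ω ∂μ := hle2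
        _ ≤ (1 + β * C1) * (1 + β * C1) ^ n :=
            mul_le_mul_of_nonneg_left ihle (by positivity)
        _ = (1 + β * C1) ^ (n + 1) := (pow_succ' _ _).symm
  obtain ⟨hFkint, hFkle⟩ := main k le_rfl
  have hFkω : ∀ ω, (∏ i ∈ Finset.range k, G i ω) = ∏ j : Fin k, Real.exp (β * X j ω ^ γ) := by
    intro ω
    rw [← Fin.prod_univ_eq_prod_range (fun i => G i ω) k]
    apply Finset.prod_congr rfl
    intro i _
    rw [hGdef]
    simp only [dif_pos i.isLt, Fin.eta]
  set A := {ω | t ≤ ∑ j, X j ω} with hAdef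
  have hAm : MeasurableSet A :=
    measurableSet_le measurable_const (Finset.measurable_sum _ fun i _ => hXm i)
  have hpt : ∀ ω ∈ A, Real.exp (β * t ^ γ) ≤ ∏ i ∈ Finset.range k, G i ω := by
    intro ω hω
    rw [hFkω, ← Real.exp_sum]
    apply Real.exp_le_exp.2
    rw [← Finset.mul_sum]
    have h1 : t ^ γ ≤ (∑ j, X j ω) ^ γ := Real.rpow_le_rpow ht hω hγ0.le
    have h2 : (∑ j, X j ω) ^ γ ≤ ∑ j, X j ω ^ γ :=
      aux_rpow_sum_le Finset.univ _ (fun i _ => hXnn i ω) hγ0 hγ1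
    exact mul_le_mul_of_nonneg_left (h1.trans h2) hβ0.le
  have h1 : (μ A).toReal * Real.exp (β * t ^ γ) ≤ ∫ ω, ∏ i ∈ Finset.range k, G i ω ∂μ := by
    have e1 : ∫ _ω in A, Real.exp (β * t ^ γ) ∂μ = (μ A).toReal * Real.exp (β * t ^ γ) := by
      rw [setIntegral_const, smul_eq_mul, measureReal_def]
    rw [← e1]
    calc ∫ _ω in A, Real.exp (β * t ^ γ) ∂μ
        ≤ ∫ ω in A, ∏ i ∈ Finset.range k, G i ω ∂μ :=
          setIntegral_mono_on
            (integrableOn_const (measure_ne_top μ A))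
            hFkint.integrableOn hAm hpt
      _ ≤ ∫ ω, ∏ i ∈ Finset.range k, G i ω ∂μ :=
          setIntegral_le_integral hFkint
            (ae_of_all _ fun ω => Finset.prod_nonneg fun i _ => hGnn i ω)
  have h2 : (μ A).toReal * Real.exp (β * t ^ γ) ≤ (1 + β * C1) ^ k := h1.trans hFkle
  have hE : (0:ℝ) < Real.exp (β * t ^ γ) := Real.exp_pos _
  rw [show -β * t ^ γ = -(β * t ^ γ) by ring, Real.exp_neg, ← div_eq_mul_inv,
    le_div_iff₀ hE]
  exact h2
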